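/- Let L_0, R_0 be disjoint languages and define L_k, R_k as the iterated mutual embeddings. If L_B = L_{B+1} = ⋯ and R_B = R_{B+1} = ⋯ and there is no infinite alternating subsequence tower between L_0 and R_0, then L_B = R_B = ∅. -/
import Mathlib


/-- An infinite alternating subsequence tower between `K` and `L`. -/
def InfSubTower {α : Type*} (K L : Set (List α)) (w : ℕ → List α) : Prop :=
  w 0 ∈ K ∪ L ∧
    ∀ i, (w i).Sublist (w (i + 1)) ∧
      (w i ∈ K → w (i + 1) ∈ L) ∧ (w i ∈ L → w (i + 1) ∈ K)

theorem stabilized_languages_empty {α : Type*}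
    (L R : ℕ → Set (List α)) (B : ℕ)
    (hdisj : Disjoint (L 0) (R 0))
    (hL : ∀ k, L (k + 1) = {w ∈ L k | ∃ u ∈ R k, w.Sublist u})
    (hR : ∀ k, R (k + 1) = {w ∈ R k | ∃ u ∈ L (k + 1), w.Sublist u})
    (hLstab : ∀ k, B ≤ k → L k = L B)
    (hRstab : ∀ k, B ≤ k → R k = R B)
    (htower : ¬ ∃ t : ℕ → List α, InfSubTower (L 0) (R 0) t) :
    L B = ∅ ∧ R B = ∅ := by
  -- monotonicity
  have hLsub : ∀ k, L k ⊆ L 0 := by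
    intro k
    induction k with
    | zero => exact subset_rfl
    | succ n ih => rw [hL n]; exact fun w hw => ih hw.1
  have hRsub : ∀ k, R k ⊆ R 0 := by
    intro k
    induction k with
    | zero => exact subset_rfl
    | succ n ih => rw [hR n]; exact fun w hw => ih hw.1
  -- step lemmas
  have stepL : ∀ w ∈ L B, ∃ u ∈ R B, w.Sublist u := by
    intro w hw
    have : w ∈ L (B + 1) := (hLstab (B + 1) (Nat.le_succ B)).symm ▸ hw
    rw [hL B] at this
    exact this.2
  have stepR : ∀ w ∈ R B, ∃ u ∈ L B, w.Sublist u := by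
    intro w hw
    have : w ∈ R (B + 1) := (hRstab (B + 1) (Nat.le_succ B)).symm ▸ hw
    rw [hR B] at this
    obtain ⟨u, hu, hs⟩ := this.2
    exact ⟨u, (hLstab (B + 1) (Nat.le_succ B)) ▸ hu, hs⟩
  -- combined step
  have step : ∀ w ∈ L B ∪ R B, ∃ u, (u ∈ L B ∪ R B) ∧ w.Sublist u ∧
      (w ∈ L 0 → u ∈ R 0) ∧ (w ∈ R 0 → u ∈ L 0) := by
    rintro w (hw | hw)
    · obtain ⟨u, hu, hs⟩ := stepL w hw
      refine ⟨u, Or.inr hu, hs, fun _ => hRsub B hu, fun hw0 => ?_⟩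
      exact absurd (hLsub B hw) (fun h => hdisj.ne_of_mem h hw0 rfl)
    · obtain ⟨u, hu, hs⟩ := stepR w hw
      refine ⟨u, Or.inl hu, hs, fun hw0 => ?_, fun _ => hLsub B hu⟩
      exact absurd hw0 (fun h => hdisj.ne_of_mem h (hRsub B hw) rfl)
  -- if L B ∪ R B nonempty, build a tower
  have key : L B ∪ R B = ∅ := by
    by_contra hne
    obtain ⟨w0, hw0⟩ := Set.nonempty_iff_ne_empty.mpr hne
    let g : ℕ → {w : List α // w ∈ L B ∪ R B} := fun n =>
      Nat.rec ⟨w0, hw0⟩ (fun _ p => ⟨(step p.1 p.2).choose, (step p.1 p.2).choose_spec.1⟩) n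
    apply htower
    refine ⟨fun n => (g n).1, (g 0).2.imp (fun h => hLsub B h) (fun h => hRsub B h), fun i => ?_⟩
    have hspec := (step (g i).1 (g i).2).choose_spec
    exact ⟨hspec.2.1, hspec.2.2.1, hspec.2.2.2⟩
  rw [Set.union_empty_iff] at key
  exact key
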